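/- Let α be a positive rational number written in irreducible form α = m/l with m, l ∈ ℕ, l ≠ 0 and gcd(m, l) = 1. Then lim_{n→∞} (1/n) · Σ_{i=0}^{n−1} [iα] = (l − 1)/(2l), where [iα] = iα − ⌊iα⌋ is the fractional part of iα. -/

import Mathlib

open Filter

private lemma fract_eq_mod (m l : ℕ) (hl : l ≠ 0) (i : ℕ) :
    Int.fract ((i : ℝ) * ((m : ℝ) / (l : ℝ))) = ((i * m % l : ℕ) : ℝ) / (l : ℝ) := by
  have hl0 : (0:ℝ) < l := by positivity
  have h1 : (i : ℝ) * ((m : ℝ) / (l : ℝ)) = ((i*m : ℕ) : ℝ) / l := by push_cast; ring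
  rw [h1]
  have hdm : i * m = l * (i * m / l) + i * m % l := (Nat.div_add_mod (i*m) l).symm
  have h2 : ((i*m : ℕ) : ℝ) / l = ((i*m/l : ℕ) : ℝ) + ((i*m % l : ℕ):ℝ)/l := by
    conv_lhs => rw [hdm]
    rw [Nat.cast_add, Nat.cast_mul]
    field_simp
  rw [h2, Int.fract_natCast_add, Int.fract_eq_self.2]
  constructor
  · positivity
  · rw [div_lt_one hl0]
    exact_mod_cast Nat.mod_lt _ (Nat.pos_of_ne_zero hl)

private lemma sum_id (n : ℕ) : ∑ j ∈ Finset.range n, (j : ℝ) = n * (n - 1) / 2 := by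
  induction n with
  | zero => simp
  | succ k ih => rw [Finset.sum_range_succ, ih]; push_cast; ring

private lemma sum_period (m l : ℕ) (hl : l ≠ 0) (hcop : Nat.gcd m l = 1) :
    ∑ i ∈ Finset.range l, Int.fract ((i : ℝ) * ((m : ℝ) / (l : ℝ)))
      = ((l:ℝ) - 1) / 2 := by
  have hl0 : (0:ℝ) < l := by positivity
  have hinj : Set.InjOn (fun i => i * m % l) (Finset.range l) := by
    intro i hi j hj hij
    simp only [Finset.coe_range, Set.mem_Iio] at hi hj
    have h1 : i * m ≡ j * m [MOD l] := hij
    have h2 : i ≡ j [MOD l] := h1.cancel_right_of_coprime (Nat.Coprime.symm hcop)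
    exact h2.eq_of_lt_of_lt hi hj
  have himg : (Finset.range l).image (fun i => i * m % l) = Finset.range l := by
    apply Finset.eq_of_subset_of_card_le
    · intro x hx
      simp only [Finset.mem_image] at hx
      obtain ⟨i, _, rfl⟩ := hx
      exact Finset.mem_range.2 (Nat.mod_lt _ (Nat.pos_of_ne_zero hl))
    · rw [Finset.card_image_of_injOn hinj]
  have key : ∑ i ∈ Finset.range l, ((i * m % l : ℕ) : ℝ)
      = ∑ j ∈ Finset.range l, (j : ℝ) := by
    have h := Finset.sum_image (s := Finset.range l) (g := fun i : ℕ => i * m % l)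
      (f := fun j : ℕ => (j : ℝ)) (fun i hi j hj h => hinj hi hj h)
    rw [himg] at h
    exact h.symm
  have hsum : ∑ j ∈ Finset.range l, (j : ℝ) = l * (l - 1) / 2 := sum_id l
  calc ∑ i ∈ Finset.range l, Int.fract ((i : ℝ) * ((m : ℝ) / (l : ℝ)))
      = ∑ i ∈ Finset.range l, ((i * m % l : ℕ) : ℝ) / l :=
        Finset.sum_congr rfl fun i _ => fract_eq_mod m l hl i
    _ = (∑ i ∈ Finset.range l, ((i * m % l : ℕ) : ℝ)) / l := by
        rw [Finset.sum_div]
    _ = ((l:ℝ) * (l - 1) / 2) / l := by rw [key, hsum]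
    _ = ((l:ℝ) - 1) / 2 := by field_simp

/-- For a positive rational `α = m / l` in irreducible form, the Cesàro averages of the
fractional parts of the integer multiples of `α` converge to `(l - 1) / (2 l)`. -/
theorem cesaro_fract_rational (m l : ℕ) (hm : 0 < m) (hl : l ≠ 0) (hcop : Nat.gcd m l = 1) :
    Tendsto (fun n : ℕ =>
        (1 / (n : ℝ)) * ∑ i ∈ Finset.range n, Int.fract ((i : ℝ) * ((m : ℝ) / (l : ℝ))))
      atTop (nhds (((l : ℝ) - 1) / (2 * (l : ℝ)))) := by
  set f : ℕ → ℝ := fun i => Int.fract ((i : ℝ) * ((m : ℝ) / (l : ℝ))) with hf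
  set c : ℝ := ((l : ℝ) - 1) / (2 * (l : ℝ)) with hc
  set S : ℕ → ℝ := fun n => ∑ i ∈ Finset.range n, f i with hSdef
  have hl1 : 1 ≤ l := Nat.one_le_iff_ne_zero.2 hl
  have hl0 : (0:ℝ) < l := by positivity
  have hl1' : (1:ℝ) ≤ l := by exact_mod_cast hl1
  have hlc : (l : ℝ) * c = ((l:ℝ) - 1) / 2 := by rw [hc]; field_simp
  have hc0 : 0 ≤ c := by rw [hc]; apply div_nonneg <;> [linarith; positivity]
  have hc1 : c ≤ 1 := by rw [hc, div_le_one (by positivity)]; linarith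
  have hper : ∀ i, f (l + i) = f i := by
    intro i
    have h1 : ((l + i : ℕ) : ℝ) * ((m : ℝ) / (l : ℝ))
        = (i : ℝ) * ((m : ℝ) / (l : ℝ)) + (m : ℕ) := by
      push_cast; field_simp; ring
    simp only [hf, h1, Int.fract_add_natCast]
  have hstep : ∀ k, S (l + k) = ((l:ℝ) - 1) / 2 + S k := by
    intro k
    rw [hSdef]
    simp only []
    rw [Finset.sum_range_add]
    congr 1
    · exact sum_period m l hl hcop
    · exact Finset.sum_congr rfl fun i _ => hper i
  have hmulti : ∀ q r, S (q * l + r) = q * (((l:ℝ) - 1) / 2) + S r := by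
    intro q
    induction q with
    | zero => intro r; simp
    | succ q ih =>
        intro r
        have h1 : (q + 1) * l + r = l + (q * l + r) := by ring
        rw [h1, hstep, ih]
        push_cast; ring
  have hbound : ∀ n, |S n - n * c| ≤ l := by
    intro n
    have hdm : n = (n / l) * l + n % l := (Nat.div_add_mod' n l).symm
    have hS : S n = ((n / l : ℕ) : ℝ) * (((l:ℝ) - 1) / 2) + S (n % l) := by
      conv_lhs => rw [hdm]
      exact hmulti _ _
    have hnc : (n : ℝ) * c = (n / l : ℕ) * (((l:ℝ) - 1) / 2) + (n % l : ℕ) * c := by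
      conv_lhs => rw [hdm]
      push_cast
      rw [← hlc]; ring
    rw [hS, hnc]
    have h2 : (n / l : ℕ) * (((l:ℝ) - 1) / 2) + S (n % l) -
        ((n / l : ℕ) * (((l:ℝ) - 1) / 2) + (n % l : ℕ) * c)
        = ∑ i ∈ Finset.range (n % l), (f i - c) := by
      rw [hSdef]; simp only []
      rw [Finset.sum_sub_distrib, Finset.sum_const, Finset.card_range]
      push_cast; ring
    rw [h2]
    calc |∑ i ∈ Finset.range (n % l), (f i - c)|
        ≤ ∑ i ∈ Finset.range (n % l), |f i - c| := Finset.abs_sum_le_sum_abs _ _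
      _ ≤ ∑ _i ∈ Finset.range (n % l), (1:ℝ) := by
          apply Finset.sum_le_sum
          intro i _
          have h3 : 0 ≤ f i := Int.fract_nonneg _
          have h4 : f i < 1 := Int.fract_lt_one _
          rw [abs_le]; constructor <;> linarith
      _ = (n % l : ℕ) := by simp
      _ ≤ l := by exact_mod_cast (Nat.mod_lt _ (Nat.pos_of_ne_zero hl)).le
  have hzero : Tendsto (fun n : ℕ => (S n - n * c) / n) atTop (nhds 0) := by
    apply squeeze_zero_norm (fun n => ?_) (tendsto_const_div_atTop_nhds_zero_nat (l:ℝ))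
    rcases Nat.eq_zero_or_pos n with h | h
    · subst h; simp [hSdef]
    · have hn0 : (0:ℝ) < n := by exact_mod_cast h
      rw [Real.norm_eq_abs, abs_div, abs_of_pos hn0]
      gcongr
      exact hbound n
  have heq : ∀ᶠ n : ℕ in atTop, c + (S n - n * c) / n = (1 / (n:ℝ)) * S n := by
    filter_upwards [eventually_ge_atTop 1] with n hn
    have hn0 : (0:ℝ) < n := by exact_mod_cast hn
    field_simp
    ring
  have := (tendsto_const_nhds (x := c)).add hzero
  rw [add_zero] at this
  exact Tendsto.congr' heq this
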